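/- Let L be the Lie algebra with basis {H, E, A, B} and relations [H,E]=E, [H,A]=αA, [H,B]=βB, [A,B]=E, [E,A]=[E,B]=0, with α+β=1. Then the element r = H⊗E − E⊗H + A⊗B − B⊗A satisfies the classical Yang–Baxter equation [r₁₂,r₁₃]+[r₁₂,r₂₃]+[r₁₃,r₂₃]=0 in U(L)^⊗3. -/

import Mathlib

open TensorProduct

attribute [local instance] LieRing.ofAssociativeRing

private lemma uea_comm {k : Type*} [Field k] {L : Type*} [LieRing L] [LieAlgebra k L]
    (x y : L) :
    (UniversalEnvelopingAlgebra.ι k (L := L)) y * UniversalEnvelopingAlgebra.ι k x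
      = UniversalEnvelopingAlgebra.ι k x * UniversalEnvelopingAlgebra.ι k y
        - UniversalEnvelopingAlgebra.ι k ⁅x, y⁆ := by
  rw [LieHom.map_lie, Ring.lie_def]; abel

/-- for the 4-dimensional carrier algebra `L` of the extended
Jordanian twist, with `[H,E]=E, [H,A]=αA, [H,B]=βB, [A,B]=E, [E,A]=[E,B]=0`
and `α+β=1`, the element `r = H⊗E − E⊗H + A⊗B − B⊗A` satisfies the classical
Yang–Baxter equation in `U(L)⊗U(L)⊗U(L)`. -/
theorem extended_jordanian_rmatrix_cybe {k : Type*} [Field k] [CharZero k]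
    {L : Type*} [LieRing L] [LieAlgebra k L] (α β : k)
    (H E A B : L) (hHE : ⁅H, E⁆ = E) (hHA : ⁅H, A⁆ = α • A)
    (hHB : ⁅H, B⁆ = β • B) (hAB : ⁅A, B⁆ = E)
    (hEA : ⁅E, A⁆ = 0) (hEB : ⁅E, B⁆ = 0) (hαβ : α + β = 1) :
    let U := UniversalEnvelopingAlgebra k L
    let ι : L →ₗ⁅k⁆ U := UniversalEnvelopingAlgebra.ι k
    let r12 : U ⊗[k] (U ⊗[k] U) :=
      ι H ⊗ₜ (ι E ⊗ₜ (1:U)) - ι E ⊗ₜ (ι H ⊗ₜ (1:U)) +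
        ι A ⊗ₜ (ι B ⊗ₜ (1:U)) - ι B ⊗ₜ (ι A ⊗ₜ (1:U))
    let r13 : U ⊗[k] (U ⊗[k] U) :=
      ι H ⊗ₜ ((1:U) ⊗ₜ ι E) - ι E ⊗ₜ ((1:U) ⊗ₜ ι H) +
        ι A ⊗ₜ ((1:U) ⊗ₜ ι B) - ι B ⊗ₜ ((1:U) ⊗ₜ ι A)
    let r23 : U ⊗[k] (U ⊗[k] U) :=
      (1:U) ⊗ₜ (ι H ⊗ₜ ι E) - (1:U) ⊗ₜ (ι E ⊗ₜ ι H) +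
        (1:U) ⊗ₜ (ι A ⊗ₜ ι B) - (1:U) ⊗ₜ (ι B ⊗ₜ ι A)
    (r12 * r13 - r13 * r12) + (r12 * r23 - r23 * r12) +
      (r13 * r23 - r23 * r13) = 0 := by
  intro U ι r12 r13 r23
  have hβ : β = 1 - α := by linear_combination hαβ
  subst hβ
  have cEH := uea_comm (k := k) H E
  have cAH := uea_comm (k := k) H A
  have cBH := uea_comm (k := k) H B
  have cAE := uea_comm (k := k) E A
  have cBE := uea_comm (k := k) E B
  have cBA := uea_comm (k := k) A B
  rw [hHE] at cEH
  rw [hHA] at cAH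
  rw [hHB] at cBH
  rw [hAB] at cBA
  rw [hEA] at cAE
  rw [hEB] at cBE
  simp only [map_zero, sub_zero] at cAE cBE
  simp only [map_smul] at cAH cBH
  simp only [r12, r13, r23, U, ι, mul_sub, sub_mul, mul_add, add_mul,
    Algebra.TensorProduct.tmul_mul_tmul, one_mul, mul_one,
    cEH, cAH, cBH, cAE, cBE, cBA,
    TensorProduct.tmul_sub, TensorProduct.sub_tmul,
    TensorProduct.tmul_add, TensorProduct.add_tmul,
    TensorProduct.smul_tmul, TensorProduct.tmul_smul]
  module
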